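/- Let D be a totally unimodular real m×n matrix with n ≥ 2 such that no index i is a loop (De_i ≠ 0 for every i), suppose that 2x ∈ B_I for every x ∈ B_I^#, and suppose the matroid of columns of D is connected in the sense that every pair of distinct column indices lies in a common circuit. Then n = 2, and the two columns of D satisfy De_1 = De_2 or De_1 = −De_2. -/

import Mathlib

open Matrix

variable {m n : ℕ}

/-- The cycle space `Z = ker D`. -/
def cycleSpace (D : Matrix (Fin m) (Fin n) ℝ) : Submodule ℝ (Fin n → ℝ) :=
  LinearMap.ker D.mulVecLin

/-- The cut space `B = Z^⊥`, the orthogonal complement of the cycle space with respect to the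
standard inner product on `ℝⁿ`. -/
def cutSpace (D : Matrix (Fin m) (Fin n) ℝ) : Submodule ℝ (Fin n → ℝ) where
  carrier := {x | ∀ z ∈ cycleSpace D, x ⬝ᵥ z = 0}
  add_mem' := by
    intro a b ha hb z hz
    simp [add_dotProduct, ha z hz, hb z hz]
  zero_mem' := by
    intro z hz
    simp
  smul_mem' := by
    intro c a ha z hz
    simp [smul_dotProduct, ha z hz]

/-- The cycle lattice `Z_I = Z ∩ ℤⁿ`. -/
def cycleLattice (D : Matrix (Fin m) (Fin n) ℝ) : Set (Fin n → ℝ) :=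
  {x | x ∈ cycleSpace D ∧ ∀ i, ∃ k : ℤ, x i = (k : ℝ)}

/-- The cut lattice `B_I = B ∩ ℤⁿ`. -/
def cutLattice (D : Matrix (Fin m) (Fin n) ℝ) : Set (Fin n → ℝ) :=
  {x | x ∈ cutSpace D ∧ ∀ i, ∃ k : ℤ, x i = (k : ℝ)}

/-- The dual lattice `B_I^# = {x ∈ B : ⟨x,b⟩ ∈ ℤ for all b ∈ B_I}`. -/
def dualLattice (D : Matrix (Fin m) (Fin n) ℝ) : Set (Fin n → ℝ) :=
  {x | x ∈ cutSpace D ∧ ∀ b ∈ cutLattice D, ∃ k : ℤ, x ⬝ᵥ b = (k : ℝ)}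

/-- `P` is the orthogonal projection matrix onto the cut space `B`: `Px ∈ B` and
`x - Px ∈ B^⊥ = Z` for every `x`. -/
def IsCutProjection (D : Matrix (Fin m) (Fin n) ℝ) (P : Matrix (Fin n) (Fin n) ℝ) : Prop :=
  ∀ x : Fin n → ℝ, P.mulVec x ∈ cutSpace D ∧ x - P.mulVec x ∈ cycleSpace D

/-- `S` is a circuit of the matroid of columns of `D`: the columns indexed by `S` are linearly
dependent, but those indexed by any proper subset are linearly independent. -/
def IsCircuit (D : Matrix (Fin m) (Fin n) ℝ) (S : Set (Fin n)) : Prop :=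
  ¬ LinearIndependent ℝ (fun j : S => D.mulVec (Pi.single (j : Fin n) (1 : ℝ))) ∧
    ∀ T : Set (Fin n), T ⊂ S →
      LinearIndependent ℝ (fun j : T => D.mulVec (Pi.single (j : Fin n) (1 : ℝ)))

/- ----------------- auxiliary lemmas ----------------- -/

lemma aux_mulVec_eq_sum (D : Matrix (Fin m) (Fin n) ℝ) (x : Fin n → ℝ) :
    D.mulVec x = ∑ j, x j • D.mulVec (Pi.single j (1 : ℝ)) := by
  have hx : x = ∑ j, x j • (Pi.single j (1 : ℝ) : Fin n → ℝ) := by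
    funext k
    simp [Finset.sum_apply, Pi.single_apply]
  calc D.mulVec x = D.mulVecLin x := rfl
    _ = D.mulVecLin (∑ j, x j • (Pi.single j (1 : ℝ) : Fin n → ℝ)) := by rw [← hx]
    _ = ∑ j, x j • D.mulVecLin ((Pi.single j (1 : ℝ) : Fin n → ℝ)) := by
        rw [map_sum]
        simp
    _ = ∑ j, x j • D.mulVec (Pi.single j (1 : ℝ)) := by
        simp [mulVecLin_apply]

/-- A vector of the kernel supported on an independent set is zero. -/
lemma aux_supported_zero (D : Matrix (Fin m) (Fin n) ℝ) {T : Set (Fin n)}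
    (hT : LinearIndependent ℝ (fun j : T => D.mulVec (Pi.single (j : Fin n) (1 : ℝ))))
    {z : Fin n → ℝ} (hz : z ∈ cycleSpace D) (hsupp : ∀ k, k ∉ T → z k = 0) : z = 0 := by
  classical
  haveI : Fintype T := Set.Finite.fintype T.toFinite
  have hz0 : D.mulVec z = 0 := hz
  have hsum : (∑ j : T, z (j : Fin n) • D.mulVec (Pi.single (j : Fin n) (1 : ℝ))) = 0 := by
    have h1 : (∑ j : T, z (j : Fin n) • D.mulVec (Pi.single (j : Fin n) (1 : ℝ)))
        = ∑ j ∈ T.toFinset, z j • D.mulVec (Pi.single j (1 : ℝ)) :=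
      Finset.sum_set_coe (f := fun j => z j • D.mulVec (Pi.single j (1 : ℝ))) T
    have h2 : (∑ j ∈ T.toFinset, z j • D.mulVec (Pi.single j (1 : ℝ)))
        = ∑ j, z j • D.mulVec (Pi.single j (1 : ℝ)) :=
      Finset.sum_subset (Finset.subset_univ _) (fun k _ hk => by
        rw [hsupp k (by simpa using hk), zero_smul])
    rw [h1, h2, ← aux_mulVec_eq_sum, hz0]
  have hall := Fintype.linearIndependent_iff.mp hT (fun j => z (j : Fin n)) hsum
  funext k
  by_cases hk : k ∈ T
  · exact hall ⟨k, hk⟩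
  · exact hsupp k hk

/-- A circuit carries a kernel vector supported on it which is nonzero at any given element. -/
lemma aux_circuit_vec (D : Matrix (Fin m) (Fin n) ℝ) {S : Set (Fin n)}
    (hS : IsCircuit D S) {i : Fin n} (hi : i ∈ S) :
    ∃ z : Fin n → ℝ, z ∈ cycleSpace D ∧ (∀ k, k ∉ S → z k = 0) ∧ z i ≠ 0 := by
  classical
  haveI : Fintype S := Set.Finite.fintype S.toFinite
  obtain ⟨g, hg0, kg, hkg⟩ := Fintype.not_linearIndependent_iff.mp hS.1
  set z : Fin n → ℝ := fun k => if h : k ∈ S then g ⟨k, h⟩ else 0 with hzdef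
  have hsupp : ∀ k, k ∉ S → z k = 0 := fun k hk => dif_neg hk
  have hzmem : z ∈ cycleSpace D := by
    have h2 : (∑ j, z j • D.mulVec (Pi.single j (1 : ℝ)))
        = ∑ j ∈ S.toFinset, z j • D.mulVec (Pi.single j (1 : ℝ)) :=
      (Finset.sum_subset (Finset.subset_univ _) (fun k _ hk => by
        rw [hsupp k (by simpa using hk), zero_smul])).symm
    have h1 : (∑ j ∈ S.toFinset, z j • D.mulVec (Pi.single j (1 : ℝ)))
        = ∑ j : S, z (j : Fin n) • D.mulVec (Pi.single (j : Fin n) (1 : ℝ)) :=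
      (Finset.sum_set_coe (f := fun j => z j • D.mulVec (Pi.single j (1 : ℝ))) S).symm
    have h3 : (∑ j : S, z (j : Fin n) • D.mulVec (Pi.single (j : Fin n) (1 : ℝ)))
        = ∑ j : S, g j • D.mulVec (Pi.single (j : Fin n) (1 : ℝ)) := by
      refine Finset.sum_congr rfl (fun j _ => ?_)
      have : z (j : Fin n) = g j := by
        rw [hzdef]
        simp only [dif_pos j.2]
      rw [this]
    show D.mulVec z = 0
    rw [aux_mulVec_eq_sum, h2, h1, h3, hg0]
  have hzne : z kg ≠ 0 := by
    have : z kg = g kg := by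
      rw [hzdef]
      simp only [dif_pos kg.2]
    rw [this]
    exact hkg
  refine ⟨z, hzmem, hsupp, ?_⟩
  intro hzi
  have hT := hS.2 (S \ {i}) (Set.sdiff_singleton_ssubset.mpr hi)
  have hz0 : z = 0 := by
    refine aux_supported_zero D hT hzmem (fun k hk => ?_)
    by_cases hkS : k ∈ S
    · have hki : k = i := by
        by_contra hne
        exact hk ⟨hkS, by simpa using hne⟩
      rw [hki]
      exact hzi
    · exact hsupp k hkS
  rw [hz0] at hzne
  exact hzne rfl

/-- Orthogonal decomposition with respect to the cycle space. -/
lemma aux_exists_proj (D : Matrix (Fin m) (Fin n) ℝ) (x : Fin n → ℝ) :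
    ∃ p : Fin n → ℝ, p ∈ cutSpace D ∧ x - p ∈ cycleSpace D := by
  classical
  let e : (Fin n → ℝ) ≃ₗ[ℝ] EuclideanSpace ℝ (Fin n) :=
    (WithLp.linearEquiv 2 ℝ (Fin n → ℝ)).symm
  let K : Submodule ℝ (EuclideanSpace ℝ (Fin n)) := (cycleSpace D).map (e : (Fin n → ℝ) →ₗ[ℝ] EuclideanSpace ℝ (Fin n))
  obtain ⟨y, hy, w, hw, hsum⟩ := K.exists_add_mem_mem_orthogonal (e x)
  refine ⟨e.symm w, ?_, ?_⟩
  · intro z hz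
    have hz' : e z ∈ K := Submodule.mem_map_of_mem hz
    have h0 : inner ℝ (e z) w = (0 : ℝ) := (Submodule.mem_orthogonal K w).mp hw (e z) hz'
    have hez : ∀ i, e z i = z i := fun _ => rfl
    have hew : ∀ i, e.symm w i = w i := fun _ => rfl
    have h1 : ∑ i, w i * z i = 0 := by
      have h1' : ∑ i, z i * w i = 0 := by
        simpa [PiLp.inner_apply, RCLike.inner_apply, hez, mul_comm] using h0
      rw [← h1']
      exact Finset.sum_congr rfl (fun i _ => mul_comm _ _)
    show e.symm w ⬝ᵥ z = 0
    simp only [dotProduct, hew]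
    exact h1
  · obtain ⟨z0, hz0, hez0⟩ := hy
    have hx : x = z0 + e.symm w := by
      have h := congrArg e.symm hsum
      simpa [← hez0] using h
    rw [hx]
    simpa using hz0

/-- if `D` is totally unimodular with `n ≥ 2` columns, no loops, `2x ∈ B_I` for
all `x ∈ B_I^#`, and every two distinct column indices lie in a common circuit, then `n = 2`
and the two columns agree up to sign. -/
theorem stmt10 (m n : ℕ) (hn : 2 ≤ n) (D : Matrix (Fin m) (Fin n) ℝ)
    (hTU : D.IsTotallyUnimodular)
    (hloop : ∀ i : Fin n, D.mulVec (Pi.single i (1 : ℝ)) ≠ 0)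
    (hexp : ∀ x ∈ dualLattice D, (2 : ℝ) • x ∈ cutLattice D)
    (hconn : ∀ i j : Fin n, i ≠ j → ∃ S : Set (Fin n), IsCircuit D S ∧ i ∈ S ∧ j ∈ S) :
    n = 2 ∧ ∀ i j : Fin n, i ≠ j →
      (D.mulVec (Pi.single i (1 : ℝ)) = D.mulVec (Pi.single j (1 : ℝ)) ∨
       D.mulVec (Pi.single i (1 : ℝ)) = -D.mulVec (Pi.single j (1 : ℝ))) := by
  classical
  choose p hpB hpZ using fun i => aux_exists_proj D (Pi.single i (1 : ℝ))
  set q : Fin n → Fin n → ℝ := fun i => Pi.single i (1 : ℝ) - p i with hqdef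
  have hqZ : ∀ i, q i ∈ cycleSpace D := fun i => hpZ i
  have hkey : ∀ i, ∀ z ∈ cycleSpace D, q i ⬝ᵥ z = z i := by
    intro i z hz
    have h1 : p i ⬝ᵥ z = 0 := hpB i z hz
    rw [hqdef]
    simp [sub_dotProduct, single_dotProduct, h1]
  have hdual : ∀ i, p i ∈ dualLattice D := by
    intro i
    refine ⟨hpB i, fun b hb => ?_⟩
    obtain ⟨k, hk⟩ := hb.2 i
    refine ⟨k, ?_⟩
    have h1 : q i ⬝ᵥ b = 0 := by
      rw [dotProduct_comm]
      exact hb.1 (q i) (hqZ i)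
    have h2 : p i ⬝ᵥ b = Pi.single i (1 : ℝ) ⬝ᵥ b - q i ⬝ᵥ b := by
      rw [hqdef, sub_dotProduct]
      ring
    rw [h2, h1, single_dotProduct, one_mul, hk, sub_zero]
  have hq2 : ∀ i j, ∃ k : ℤ, 2 * q i j = (k : ℝ) := by
    intro i j
    obtain ⟨k, hk⟩ := (hexp (p i) (hdual i)).2 j
    have hk' : 2 * p i j = (k : ℝ) := by simpa using hk
    refine ⟨(if j = i then 2 else 0) - k, ?_⟩
    rw [hqdef]
    simp only [Pi.sub_apply, Pi.single_apply]
    push_cast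
    split_ifs <;> linarith
  have hqq : ∀ i, q i ⬝ᵥ q i = q i i := fun i => hkey i (q i) (hqZ i)
  have hnorm : ∀ i, ∑ j, (q i j) ^ 2 = q i i := by
    intro i
    rw [← hqq i]
    simp [dotProduct, sq]
  have hother : ∀ i : Fin n, ∃ j : Fin n, j ≠ i := by
    intro i
    rcases Nat.lt_or_ge i.val 1 with h | h
    · exact ⟨⟨1, by omega⟩, Fin.ne_of_val_ne (by simp; omega)⟩
    · exact ⟨⟨0, by omega⟩, Fin.ne_of_val_ne (by simp; omega)⟩
  have hdiag : ∀ i, q i i = 1 / 2 := by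
    intro i
    have h0 : 0 ≤ q i i := by
      rw [← hnorm i]
      exact Finset.sum_nonneg (fun j _ => sq_nonneg _)
    have hsq : (q i i) ^ 2 ≤ q i i := by
      calc (q i i) ^ 2 ≤ ∑ j, (q i j) ^ 2 :=
            Finset.single_le_sum (fun j (_ : j ∈ Finset.univ) => sq_nonneg (q i j))
              (Finset.mem_univ i)
        _ = q i i := hnorm i
    have hne0 : q i i ≠ 0 := by
      intro h
      have hz0 : ∀ j, q i j = 0 := by
        have hs : ∑ j, (q i j) ^ 2 = 0 := by rw [hnorm i, h]
        intro j
        have h4 := (Finset.sum_eq_zero_iff_of_nonneg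
          (fun j (_ : j ∈ Finset.univ) => sq_nonneg (q i j))).mp hs j (Finset.mem_univ j)
        exact pow_eq_zero_iff (by norm_num) |>.mp h4
      obtain ⟨j, hj⟩ := hother i
      obtain ⟨S, hS, hiS, hjS⟩ := hconn i j (Ne.symm hj)
      obtain ⟨z, hzZ, hzsupp, hzi⟩ := aux_circuit_vec D hS hiS
      have hzi0 : z i = 0 := by
        rw [← hkey i z hzZ]
        have hq0 : q i = 0 := funext hz0
        rw [hq0]
        simp
      exact hzi hzi0
    have hne1 : q i i ≠ 1 := by
      intro h
      have hrest : ∑ j ∈ Finset.univ.erase i, (q i j) ^ 2 = 0 := by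
        have h5 := hnorm i
        rw [← Finset.add_sum_erase _ _ (Finset.mem_univ i), h] at h5
        nlinarith [h5]
      have hz0 : ∀ j, j ≠ i → q i j = 0 := by
        intro j hj
        have h4 := (Finset.sum_eq_zero_iff_of_nonneg
          (fun j (_ : j ∈ Finset.univ.erase i) => sq_nonneg (q i j))).mp hrest j
          (Finset.mem_erase.mpr ⟨hj, Finset.mem_univ j⟩)
        exact pow_eq_zero_iff (by norm_num) |>.mp h4
      have hqe : q i = Pi.single i (1 : ℝ) := by
        funext j
        by_cases hj : j = i
        · rw [hj, h]
          simp
        · rw [hz0 j hj]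
          simp [Pi.single_apply, hj]
      have h5 : q i ∈ cycleSpace D := hqZ i
      rw [hqe] at h5
      exact hloop i h5
    obtain ⟨k, hk⟩ := hq2 i i
    have hklb : (0 : ℝ) < k := by
      rw [← hk]
      rcases lt_or_eq_of_le h0 with h | h
      · linarith
      · exact absurd h.symm hne0
    have hkub : (k : ℝ) < 2 := by
      rw [← hk]
      have hle1 : q i i ≤ 1 := by nlinarith
      rcases lt_or_eq_of_le hle1 with h | h
      · linarith
      · exact absurd h hne1
    have hk1 : k = 1 := by
      have h1 : 0 < k := by exact_mod_cast hklb
      have h2 : k < 2 := by exact_mod_cast hkub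
      omega
    rw [hk1] at hk
    push_cast at hk
    linarith
  -- partner lemma : q i = (1/2)(e_i + ε e_k) for some k ≠ i, ε = ±1
  have hpartner : ∀ i : Fin n, ∃ k : Fin n, k ≠ i ∧ ∃ ε : ℝ, (ε = 1 ∨ ε = -1) ∧
      q i = (1 / 2 : ℝ) • ((Pi.single i (1 : ℝ) : Fin n → ℝ) + ε • (Pi.single k (1 : ℝ) : Fin n → ℝ)) := by
    intro i
    choose M hM using hq2 i
    have hMi : M i = 1 := by
      have h1 := hM i
      rw [hdiag i] at h1
      have h2 : (M i : ℝ) = 1 := by linarith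
      exact_mod_cast h2
    have hsumM : ∑ j, (M j) ^ 2 = 2 := by
      have hr : ∑ j, ((M j : ℝ)) ^ 2 = 2 := by
        have h4 : ∑ j, ((M j : ℝ)) ^ 2 = ∑ j, 4 * (q i j) ^ 2 := by
          refine Finset.sum_congr rfl (fun j _ => ?_)
          rw [← hM j]
          ring
        rw [h4, ← Finset.mul_sum, hnorm i, hdiag i]
        norm_num
      have hr' : ((∑ j, (M j) ^ 2 : ℤ) : ℝ) = ((2 : ℤ) : ℝ) := by
        push_cast
        exact hr
      exact_mod_cast hr'
    have hrest : ∑ j ∈ Finset.univ.erase i, (M j) ^ 2 = 1 := by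
      have h5 := hsumM
      rw [← Finset.add_sum_erase _ _ (Finset.mem_univ i), hMi] at h5
      omega
    have hexk : ∃ k ∈ Finset.univ.erase i, M k ≠ 0 := by
      by_contra hno
      push_neg at hno
      have h6 : ∑ j ∈ Finset.univ.erase i, (M j) ^ 2 = 0 :=
        Finset.sum_eq_zero (fun j hj => by rw [hno j hj]; ring)
      omega
    obtain ⟨k, hkmem, hkne⟩ := hexk
    have hksq : (M k) ^ 2 = 1 ∧ ∀ j ∈ (Finset.univ.erase i).erase k, M j = 0 := by
      have hsplit : (M k) ^ 2 + ∑ j ∈ (Finset.univ.erase i).erase k, (M j) ^ 2 = 1 := by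
        rw [Finset.add_sum_erase (Finset.univ.erase i) (fun j => M j ^ 2) hkmem]
        exact hrest
      have hk1 : 1 ≤ (M k) ^ 2 := by
        rcases lt_trichotomy (M k) 0 with h | h | h
        · nlinarith
        · exact absurd h hkne
        · nlinarith
      have hnn : 0 ≤ ∑ j ∈ (Finset.univ.erase i).erase k, (M j) ^ 2 :=
        Finset.sum_nonneg (fun j _ => sq_nonneg _)
      have h20 : ∑ j ∈ (Finset.univ.erase i).erase k, (M j) ^ 2 = 0 := by omega
      refine ⟨by omega, fun j hj => ?_⟩
      have h7 := (Finset.sum_eq_zero_iff_of_nonneg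
        (fun j _ => sq_nonneg (M j))).mp h20 j hj
      exact pow_eq_zero_iff (by norm_num) |>.mp h7
    have hMk : M k = 1 ∨ M k = -1 := by
      have h8 := hksq.1
      rcases lt_trichotomy (M k) 0 with h | h | h
      · right; nlinarith
      · exact absurd h hkne
      · left; nlinarith
    have hkne_i : k ≠ i := (Finset.mem_erase.mp hkmem).1
    refine ⟨k, hkne_i, (M k : ℝ), ?_, ?_⟩
    · rcases hMk with h | h
      · left; rw [h]; norm_num
      · right; rw [h]; push_cast; ring
    · funext j
      have hMj := hM j
      by_cases hji : j = i
      · subst hji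
        rw [hdiag j]
        simp [Pi.single_apply, Ne.symm hkne_i]
      · by_cases hjk : j = k
        · subst hjk
          have h9 : q i j = (M j : ℝ) / 2 := by linarith
          rw [h9]
          simp [Pi.single_apply, hji]
          ring
        · have hj0 : M j = 0 := hksq.2 j
            (Finset.mem_erase.mpr ⟨hjk, Finset.mem_erase.mpr ⟨hji, Finset.mem_univ j⟩⟩)
          have h10 : q i j = 0 := by
            rw [hj0] at hMj
            push_cast at hMj
            linarith
          rw [h10]
          simp [Pi.single_apply, hji, hjk]
  -- consequences of the partner lemma
  have hvmem : ∀ (i k : Fin n) (ε : ℝ),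
      q i = (1 / 2 : ℝ) • ((Pi.single i (1 : ℝ) : Fin n → ℝ) + ε • (Pi.single k (1 : ℝ) : Fin n → ℝ)) →
      ((Pi.single i (1 : ℝ) : Fin n → ℝ) + ε • (Pi.single k (1 : ℝ) : Fin n → ℝ)) ∈ cycleSpace D := by
    intro i k ε hqeq
    have h2 : ((2 : ℝ) • q i) ∈ cycleSpace D := Submodule.smul_mem _ _ (hqZ i)
    rw [hqeq, smul_smul] at h2
    norm_num at h2
    exact h2
  have hzid : ∀ (i k : Fin n) (ε : ℝ),
      q i = (1 / 2 : ℝ) • ((Pi.single i (1 : ℝ) : Fin n → ℝ) + ε • (Pi.single k (1 : ℝ) : Fin n → ℝ)) →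
      ∀ z ∈ cycleSpace D, z i = ε * z k := by
    intro i k ε hqeq z hz
    have h1 := hkey i z hz
    rw [hqeq] at h1
    simp only [smul_dotProduct, add_dotProduct, single_dotProduct, smul_eq_mul, one_mul] at h1
    linarith
  -- n = 2
  have hn2 : n = 2 := by
    by_contra hne
    have h3 : 3 ≤ n := by omega
    have h0n : 0 < n := by omega
    obtain ⟨k0, hk0ne, ε, hε, hqeq⟩ := hpartner (⟨0, h0n⟩ : Fin n)
    set i0 : Fin n := ⟨0, h0n⟩ with hi0def
    obtain ⟨j, hji0, hjk0⟩ : ∃ j : Fin n, j ≠ i0 ∧ j ≠ k0 := by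
      by_cases hca : k0 = (⟨1, by omega⟩ : Fin n)
      · refine ⟨⟨2, by omega⟩, Fin.ne_of_val_ne ?_, ?_⟩
        · show (2 : ℕ) ≠ 0
          omega
        · rw [hca]
          refine Fin.ne_of_val_ne ?_
          show (2 : ℕ) ≠ 1
          omega
      · refine ⟨⟨1, by omega⟩, Fin.ne_of_val_ne ?_, Ne.symm hca⟩
        show (1 : ℕ) ≠ 0
        omega
    obtain ⟨S, hS, hi0S, hjS⟩ := hconn i0 j (Ne.symm hji0)
    have hk0S : k0 ∉ S := by
      intro hk0S
      set T : Set (Fin n) := {i0, k0} with hTdef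
      have hTsub : T ⊆ S := by
        intro x hx
        rcases hx with hx | hx
        · rw [hx]; exact hi0S
        · rw [hx]; exact hk0S
      have hTS : T ⊂ S := by
        refine HasSubset.Subset.ssubset_of_ne hTsub ?_
        intro hTeq
        have : j ∈ T := by rw [hTeq]; exact hjS
        rcases this with h | h
        · exact hji0 h
        · exact hjk0 h
      have hT := hS.2 T hTS
      have hv := hvmem i0 k0 ε hqeq
      have hvz : (Pi.single i0 (1 : ℝ) : Fin n → ℝ) + ε • (Pi.single k0 (1 : ℝ) : Fin n → ℝ) = 0 := by
        refine aux_supported_zero D hT hv (fun l hl => ?_)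
        have hli0 : l ≠ i0 := fun h => hl (by rw [h]; left; rfl)
        have hlk0 : l ≠ k0 := fun h => hl (by rw [h]; right; rfl)
        simp [Pi.single_apply, hli0, hlk0]
      have hv1 : ((Pi.single i0 (1 : ℝ) : Fin n → ℝ) + ε • (Pi.single k0 (1 : ℝ) : Fin n → ℝ)) i0 = 1 := by
        simp [Pi.single_apply, hk0ne]
      rw [hvz] at hv1
      simp at hv1
    obtain ⟨z, hzZ, hzsupp, hzi⟩ := aux_circuit_vec D hS hi0S
    have hzk0 : z k0 = 0 := hzsupp k0 hk0S
    have := hzid i0 k0 ε hqeq z hzZ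
    rw [hzk0, mul_zero] at this
    exact hzi this
  refine ⟨hn2, fun i j hij => ?_⟩
  obtain ⟨k, hkne, ε, hε, hqeq⟩ := hpartner i
  have hkj : k = j := by
    have h1 : (i : ℕ) < n := i.isLt
    have h2 : (j : ℕ) < n := j.isLt
    have h3 : (k : ℕ) < n := k.isLt
    have h4 : (k : ℕ) ≠ (i : ℕ) := fun h => hkne (Fin.ext h)
    have h5 : (i : ℕ) ≠ (j : ℕ) := fun h => hij (Fin.ext h)
    refine Fin.ext ?_
    omega
  subst hkj
  have hv := hvmem i k ε hqeq
  have hcol : D.mulVec (Pi.single i (1 : ℝ)) + ε • D.mulVec (Pi.single k (1 : ℝ)) = 0 := by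
    have h3 : D.mulVec ((Pi.single i (1 : ℝ) : Fin n → ℝ) + ε • (Pi.single k (1 : ℝ) : Fin n → ℝ)) = 0 := hv
    rw [mulVec_add, mulVec_smul] at h3
    exact h3
  rcases hε with h | h
  · right
    rw [h, one_smul] at hcol
    exact eq_neg_of_add_eq_zero_left hcol
  · left
    rw [h, neg_one_smul] at hcol
    exact eq_of_sub_eq_zero (by rw [sub_eq_add_neg]; exact hcol)
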